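/- Let H = ⊕_{n≥0} H_n be the orthogonal decomposition of a regular unitarily invariant space into homogeneous components, let p be a homogeneous prime ideal of ℂ[x_1,…,x_d], and let a ⊆ M(H) be the weak-* closure of p. Then [aH] ∩ ℂ[x_1,…,x_d] = p, where [aH] is the closed subspace spanned by {fh : f ∈ a, h ∈ H}. -/

import Mathlib

/-!
STATEMENT 14: Let H = ⊕_n H_n be a regular unitarily invariant space with its
orthogonal decomposition into homogeneous components, p a homogeneous prime
ideal of ℂ[x_1,…,x_d], and a ⊆ M(H) the weak-* closure of p.  Then
[aH] ∩ ℂ[x_1,…,x_d] = p, where [aH] = closed span of {f h : f ∈ a, h ∈ H}.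

Model: the polynomials sit inside the Hilbert space H via an injective linear
map e with dense range, homogeneous components of different degrees are
orthogonal; polynomials act as multipliers via the algebra map T into a
commutative subalgebra A of B(H); the ideal a of A contains T(p) and each of
its members is a weak (WOT) limit of multiplication operators by members of p
(this encodes "a is the weak-* closure of p").
-/

noncomputable section

open scoped BigOperators

theorem closure_span_inter_polynomials_eq
    {d : ℕ} {H : Type*} [NormedAddCommGroup H] [InnerProductSpace ℂ H] [CompleteSpace H]
    (e : MvPolynomial (Fin d) ℂ →ₗ[ℂ] H)
    (he : Function.Injective e) (hdense : DenseRange e)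
    (horth : ∀ (m n : ℕ) (q q' : MvPolynomial (Fin d) ℂ), q.IsHomogeneous m →
      q'.IsHomogeneous n → m ≠ n → (inner ℂ (e q) (e q') : ℂ) = 0)
    (A : Subalgebra ℂ (H →L[ℂ] H))
    (T : MvPolynomial (Fin d) ℂ →ₐ[ℂ] A)
    (hT : ∀ q q' : MvPolynomial (Fin d) ℂ, (T q : H →L[ℂ] H) (e q') = e (q * q'))
    (p : Ideal (MvPolynomial (Fin d) ℂ)) (hp : p.IsPrime)
    (hphom : ∀ f ∈ p, ∀ n : ℕ, MvPolynomial.homogeneousComponent n f ∈ p)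
    (a : Ideal A)
    (hpa : ∀ q ∈ p, T q ∈ a)
    -- every member of a is a WOT limit of multiplication operators by members of p:
    (haw : ∀ f ∈ a, ∀ (m : ℕ) (x y : Fin m → H) (ε : ℝ), 0 < ε →
      ∃ q ∈ p, ∀ i, ‖(inner ℂ (((f : H →L[ℂ] H) - (T q : H →L[ℂ] H)) (x i)) (y i) : ℂ)‖ < ε) :
    ∀ q : MvPolynomial (Fin d) ℂ,
      e q ∈ closure (Submodule.span ℂ
          {v : H | ∃ f ∈ a, ∃ h : H, v = (f : H →L[ℂ] H) h} : Set H)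
        ↔ q ∈ p := by
  classical
  intro q₀
  constructor
  · -- hard direction
    intro hq₀
    set N := q₀.totalDegree with hN
    -- the finite-dimensional subspace of (images of) polynomials of degree ≤ N
    set PN : Submodule ℂ (MvPolynomial (Fin d) ℂ) :=
      MvPolynomial.restrictTotalDegree (Fin d) ℂ N with hPN
    set E : Submodule ℂ H := Submodule.map e PN with hE
    set F : Submodule ℂ H := Submodule.map e (PN ⊓ p.restrictScalars ℂ) with hF
    haveI : FiniteDimensional ℂ PN := inferInstance
    haveI : FiniteDimensional ℂ E := inferInstance
    haveI : FiniteDimensional ℂ (PN ⊓ p.restrictScalars ℂ : Submodule ℂ _) :=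
      Submodule.finiteDimensional_of_le inf_le_left
    haveI : FiniteDimensional ℂ F := inferInstance
    have hFclosed : IsClosed (F : Set H) := F.closed_of_finiteDimensional
    -- orthogonality of low-degree vs high-degree polynomials
    have horth' : ∀ s t : MvPolynomial (Fin d) ℂ, s.totalDegree ≤ N →
        (∀ n ≤ N, MvPolynomial.homogeneousComponent n t = 0) →
        (inner ℂ (e s) (e t) : ℂ) = 0 := by
      intro s t hs ht
      conv_lhs =>
        rw [← MvPolynomial.sum_homogeneousComponent s, ← MvPolynomial.sum_homogeneousComponent t]
      rw [map_sum, map_sum, sum_inner]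
      refine Finset.sum_eq_zero fun m hm => ?_
      rw [inner_sum]
      refine Finset.sum_eq_zero fun n hn => ?_
      by_cases hnN : n ≤ N
      · rw [ht n hnN, map_zero, inner_zero_right]
      · refine horth m n _ _ (MvPolynomial.homogeneousComponent_isHomogeneous m s)
          (MvPolynomial.homogeneousComponent_isHomogeneous n t) ?_
        have hmN : m ≤ N := le_trans (Nat.lt_succ_iff.mp (Finset.mem_range.mp hm)) hs
        omega
    -- projection of (the image of) a member of p lies in F
    have hpolyproj : ∀ r ∈ p, (E.orthogonalProjectionOnto (e r) : H) ∈ F := by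
      intro r hr
      set rlow : MvPolynomial (Fin d) ℂ :=
        ∑ n ∈ Finset.range (N + 1), MvPolynomial.homogeneousComponent n r with hrlow
      have hrlowp : rlow ∈ p := Ideal.sum_mem p fun n _ => hphom r hr n
      have hrlowdeg : rlow.totalDegree ≤ N := by
        refine le_trans (MvPolynomial.totalDegree_finset_sum _ _) (Finset.sup_le fun n hn => ?_)
        exact le_trans (MvPolynomial.homogeneousComponent_isHomogeneous n r).totalDegree_le
          (Nat.lt_succ_iff.mp (Finset.mem_range.mp hn))
      have hrlowPN : rlow ∈ PN := (MvPolynomial.mem_restrictTotalDegree _ _ _).mpr hrlowdeg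
      have hhc : ∀ n ≤ N, MvPolynomial.homogeneousComponent n (r - rlow) = 0 := by
        intro n hn
        have : MvPolynomial.homogeneousComponent n rlow
            = MvPolynomial.homogeneousComponent n r := by
          rw [hrlow, map_sum]
          rw [Finset.sum_eq_single n]
          · rw [MvPolynomial.homogeneousComponent_of_mem
              (MvPolynomial.homogeneousComponent_mem n r), if_pos rfl]
          · intro m _ hmn
            rw [MvPolynomial.homogeneousComponent_of_mem
              (MvPolynomial.homogeneousComponent_mem m r), if_neg (Ne.symm hmn)]
          · intro hnmem
            exact absurd (Finset.mem_range.mpr (Nat.lt_succ_of_le hn)) hnmem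
        rw [map_sub, this, sub_self]
      have hmemE : e rlow ∈ E := ⟨rlow, hrlowPN, rfl⟩
      have hproj : (E.orthogonalProjectionOnto (e r) : H) = e rlow := by
        refine Submodule.eq_starProjection_of_mem_of_inner_eq_zero hmemE ?_
        intro w hw
        obtain ⟨s, hs, rfl⟩ := hw
        have := horth' s (r - rlow) ((MvPolynomial.mem_restrictTotalDegree _ _ _).mp hs) hhc
        rw [← map_sub, ← inner_conj_symm (e (r - rlow)) (e s), this, map_zero]
      rw [hproj]
      exact ⟨rlow, ⟨hrlowPN, hrlowp⟩, rfl⟩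
    -- projection of (T q) h lies in F for q ∈ p, h ∈ H
    have hTqproj : ∀ q ∈ p, ∀ h : H,
        (E.orthogonalProjectionOnto ((T q : H →L[ℂ] H) h) : H) ∈ F := by
      intro q hq h
      have hcont : Continuous fun h : H =>
          (E.orthogonalProjectionOnto ((T q : H →L[ℂ] H) h) : H) := by
        exact (E.subtypeL.comp ((E.orthogonalProjectionOnto).comp (T q : H →L[ℂ] H))).continuous
      have hclosed : IsClosed {h : H |
          (E.orthogonalProjectionOnto ((T q : H →L[ℂ] H) h) : H) ∈ F} :=
        hFclosed.preimage hcont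
      have hrange : Set.range e ⊆ {h : H |
          (E.orthogonalProjectionOnto ((T q : H →L[ℂ] H) h) : H) ∈ F} := by
        rintro _ ⟨r, rfl⟩
        show (E.orthogonalProjectionOnto ((T q : H →L[ℂ] H) (e r)) : H) ∈ F
        rw [hT q r]
        exact hpolyproj (q * r) (Ideal.mul_mem_right r p hq)
      have : (Set.univ : Set H) ⊆ {h : H |
          (E.orthogonalProjectionOnto ((T q : H →L[ℂ] H) h) : H) ∈ F} := by
        rw [← hdense.closure_range]
        exact hclosed.closure_subset_iff.mpr hrange
      exact this (Set.mem_univ h)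
    -- projection of f h lies in F for f ∈ a, h ∈ H
    haveI : CompleteSpace E := FiniteDimensional.complete ℂ E
    set b := stdOrthonormalBasis ℂ E with hb
    set m := Module.finrank ℂ E with hm
    have hfproj : ∀ f ∈ a, ∀ h : H,
        (E.orthogonalProjectionOnto ((f : H →L[ℂ] H) h) : H) ∈ F := by
      intro f hf h
      rw [← SetLike.mem_coe, ← hFclosed.closure_eq, Metric.mem_closure_iff]
      intro ε hε
      have hε' : 0 < ε / (m + 1) := by positivity
      obtain ⟨q, hq, hqlt⟩ := haw f hf m (fun _ => h) (fun i => (b i : H)) (ε / (m + 1)) hε'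
      refine ⟨(E.orthogonalProjectionOnto ((T q : H →L[ℂ] H) h) : H), hTqproj q hq h, ?_⟩
      rw [dist_eq_norm]
      have hsub : (E.orthogonalProjectionOnto ((f : H →L[ℂ] H) h) : H)
          - (E.orthogonalProjectionOnto ((T q : H →L[ℂ] H) h) : H)
          = (E.orthogonalProjectionOnto
              (((f : H →L[ℂ] H) - (T q : H →L[ℂ] H)) h) : H) := by
        rw [ContinuousLinearMap.sub_apply, map_sub]
        rfl
      rw [hsub]
      set w : H := ((f : H →L[ℂ] H) - (T q : H →L[ℂ] H)) h with hw
      have hform : (E.orthogonalProjectionOnto w : H)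
          = ∑ i, (inner ℂ (b i : H) w : ℂ) • (b i : H) := by
        rw [b.orthogonalProjectionOnto_apply_eq_sum]
        push_cast [Submodule.coe_sum]
        rfl
      rw [hform]
      have hbound : ‖∑ i, (inner ℂ (b i : H) w : ℂ) • (b i : H)‖ ≤ (m : ℝ) * (ε / (m + 1)) := by
        refine le_trans (norm_sum_le _ _) ?_
        have : ∀ i : Fin m, ‖(inner ℂ (b i : H) w : ℂ) • (b i : H)‖ ≤ ε / (m + 1) := by
          intro i
          rw [norm_smul]
          have hb1 : ‖(b i : H)‖ ≤ 1 := le_of_eq (b.orthonormal.1 i)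
          have : ‖(inner ℂ (b i : H) w : ℂ)‖ < ε / (m + 1) := by
            rw [norm_inner_symm]
            exact hqlt i
          calc ‖(inner ℂ (b i : H) w : ℂ)‖ * ‖(b i : H)‖
              ≤ ‖(inner ℂ (b i : H) w : ℂ)‖ * 1 := by
                exact mul_le_mul_of_nonneg_left hb1 (norm_nonneg _)
            _ ≤ ε / (m + 1) := by rw [mul_one]; exact this.le
        calc ∑ i, ‖(inner ℂ (b i : H) w : ℂ) • (b i : H)‖
            ≤ ∑ _i : Fin m, ε / (m + 1) := Finset.sum_le_sum fun i _ => this i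
          _ = (m : ℝ) * (ε / (m + 1)) := by
              rw [Finset.sum_const, Finset.card_univ, Fintype.card_fin, nsmul_eq_mul]
      refine lt_of_le_of_lt hbound ?_
      have hmlt : (m : ℝ) / (m + 1) < 1 := by
        rw [div_lt_one (by positivity)]
        linarith
      calc (m : ℝ) * (ε / (m + 1)) = ((m : ℝ) / (m + 1)) * ε := by ring
        _ < 1 * ε := by exact mul_lt_mul_of_pos_right hmlt hε
        _ = ε := one_mul ε
    -- the preimage of F under the projection is a closed submodule containing the generators
    set Φ : H →L[ℂ] H := E.subtypeL.comp (E.orthogonalProjectionOnto) with hΦ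
    set S : Submodule ℂ H := F.comap (Φ : H →ₗ[ℂ] H) with hS
    have hSclosed : IsClosed (S : Set H) := hFclosed.preimage Φ.continuous
    have hgen : {v : H | ∃ f ∈ a, ∃ h : H, v = (f : H →L[ℂ] H) h} ⊆ (S : Set H) := by
      rintro _ ⟨f, hf, h, rfl⟩
      exact hfproj f hf h
    have hsub : closure (Submodule.span ℂ
        {v : H | ∃ f ∈ a, ∃ h : H, v = (f : H →L[ℂ] H) h} : Set H) ⊆ (S : Set H) :=
      closure_minimal (Submodule.span_le.mpr hgen) hSclosed
    have hq₀S : e q₀ ∈ S := hsub hq₀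
    have hq₀E : e q₀ ∈ E :=
      ⟨q₀, (MvPolynomial.mem_restrictTotalDegree _ _ _).mpr le_rfl, rfl⟩
    have hΦq₀ : Φ (e q₀) = e q₀ := Submodule.starProjection_eq_self_iff.mpr hq₀E
    have : e q₀ ∈ F := by
      have := hq₀S
      rw [hS, Submodule.mem_comap] at this
      simpa [hΦq₀] using this
    obtain ⟨r, ⟨_, hrp⟩, hre⟩ := this
    rwa [← he hre]
  · -- easy direction: q ∈ p implies e q = (T q)(e 1) is a generator
    intro hq
    have : e q₀ ∈ {v : H | ∃ f ∈ a, ∃ h : H, v = (f : H →L[ℂ] H) h} := by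
      refine ⟨T q₀, hpa q₀ hq, e 1, ?_⟩
      rw [hT q₀ 1, mul_one]
    exact subset_closure (Submodule.subset_span this)

end
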